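/- Let ω be a geometrically realizable sorting network of size n, let m ≥ 2, and let γ be a sorting network of size m. Suppose that γ, viewed as a pattern, occurs in ω at time interval [1, t] for some t and at position [a, a+m−2] for some a. Then γ is geometrically realizable. -/
import Mathlib


noncomputable section

/-- The adjacent transposition (swap) `σ_j = (j, j+1)`, acting on `ℕ` (we use labels `1,…,n`). -/
def swapPerm (j : ℕ) : Equiv.Perm ℕ := Equiv.swap j (j + 1)

/-- A sorting network of size `n` is a sequence `s` of `N = n(n-1)/2` integers with
`0 < s_k < n` such that `σ_{s_1} σ_{s_2} ⋯ σ_{s_N}` (with composition `(στ)(i) = σ(τ(i))`)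
is the reverse permutation of `{1,…,n}`. -/
def IsSortingNetwork (n : ℕ) (s : List ℕ) : Prop :=
  2 ≤ n ∧ s.length = n * (n - 1) / 2 ∧ (∀ x ∈ s, 0 < x ∧ x < n) ∧
    ∀ i ∈ Finset.Icc 1 n, (s.map swapPerm).prod i = n + 1 - i

/-- A pattern is an initial segment of some sorting network. -/
def IsPattern (γ : List ℕ) : Prop :=
  ∃ n s, IsSortingNetwork n s ∧ γ <+: s

/-- The size of a pattern: one more than its maximal element. -/
def patternSize (γ : List ℕ) : ℕ := γ.foldr max 0 + 1

/-- The pattern `γ` occurs in the sorting network `s` of size `n` at time interval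
`[i,j] ⊆ [1, s.length]` and position `[a,b] ⊆ [1, n-1]`: the subsequence of `s_i,…,s_j`
consisting of the elements lying in `[a,b]` is exactly `γ` shifted by `a - 1`, and no swap
in the time window occurs at positions `a-1` or `b+1`. -/
def OccursAt (γ : List ℕ) (n : ℕ) (s : List ℕ) (i j a b : ℕ) : Prop :=
  1 ≤ i ∧ i ≤ j ∧ j ≤ s.length ∧ 1 ≤ a ∧ a ≤ b ∧ b ≤ n - 1 ∧
    ((s.drop (i - 1)).take (j + 1 - i)).filter (fun x => decide (a ≤ x ∧ x ≤ b))
      = γ.map (fun u => u + a - 1) ∧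
    ∀ x ∈ (s.drop (i - 1)).take (j + 1 - i), x ≠ a - 1 ∧ x ≠ b + 1

/-- The pattern `γ` occurs at least `R` times in `s` : there are `R` pairwise disjoint
rectangles `[i_r, j_r] × [a_r, b_r]` at each of which `γ` occurs. -/
def OccursAtLeast (γ : List ℕ) (n : ℕ) (s : List ℕ) (R : ℕ) : Prop :=
  ∃ rect : Fin R → (ℕ × ℕ) × (ℕ × ℕ),
    (∀ r, OccursAt γ n s (rect r).1.1 (rect r).1.2 (rect r).2.1 (rect r).2.2) ∧
    ∀ r r', r ≠ r' →
      Disjoint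
        (Finset.Icc (rect r).1.1 (rect r).1.2 ×ˢ Finset.Icc (rect r).2.1 (rect r).2.2)
        (Finset.Icc (rect r').1.1 (rect r').1.2 ×ˢ Finset.Icc (rect r').2.1 (rect r').2.2)

/-- Rotation of the plane by angle `φ` about the origin. -/
def rotPt (φ : ℝ) (p : ℝ × ℝ) : ℝ × ℝ :=
  (p.1 * Real.cos φ - p.2 * Real.sin φ, p.1 * Real.sin φ + p.2 * Real.cos φ)

/-- 2×2 determinant of two plane vectors. -/
def det2 (u v : ℝ × ℝ) : ℝ := u.1 * v.2 - u.2 * v.1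

/-- A sorting network `s` of size `n` is geometrically realizable if there is a configuration
`x_1, …, x_n` of points in the plane (labeled in increasing order of first coordinate, with
no two points on a common vertical line, no three collinear, and no two distinct pairs
determining parallel lines) and angles `0 < φ_1 < ⋯ < φ_N < π` such that for every angle
`ψ ∈ (0,π)` different from all `φ_t`, reading the labels of the points rotated by `ψ` in
increasing order of first coordinate gives the permutation `σ_{s_1} ∘ ⋯ ∘ σ_{s_k}`, where
`k = #{t : φ_t < ψ}`.  (In particular the permutation changes exactly at the angles `φ_t`,
by the adjacent transposition at position `s_t`.) -/
def GeometricallyRealizable (n : ℕ) (s : List ℕ) : Prop :=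
  ∃ x : ℕ → ℝ × ℝ,
    (∀ i ∈ Finset.Icc 1 n, ∀ j ∈ Finset.Icc 1 n, i < j → (x i).1 < (x j).1) ∧
    (∀ i ∈ Finset.Icc 1 n, ∀ j ∈ Finset.Icc 1 n, ∀ k ∈ Finset.Icc 1 n,
      i ≠ j → i ≠ k → j ≠ k → det2 (x j - x i) (x k - x i) ≠ 0) ∧
    (∀ i ∈ Finset.Icc 1 n, ∀ j ∈ Finset.Icc 1 n, ∀ k ∈ Finset.Icc 1 n, ∀ l ∈ Finset.Icc 1 n,
      i ≠ j → k ≠ l → ({i, j} : Finset ℕ) ≠ {k, l} → det2 (x j - x i) (x l - x k) ≠ 0) ∧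
    ∃ φ : ℕ → ℝ,
      (∀ t ∈ Finset.Icc 1 s.length, 0 < φ t ∧ φ t < Real.pi) ∧
      (∀ t ∈ Finset.Icc 1 s.length, ∀ t' ∈ Finset.Icc 1 s.length, t < t' → φ t < φ t') ∧
      ∀ ψ : ℝ, 0 < ψ → ψ < Real.pi → (∀ t ∈ Finset.Icc 1 s.length, ψ ≠ φ t) →
        ∀ u ∈ Finset.Icc 1 n, ∀ v ∈ Finset.Icc 1 n, u < v →
          (rotPt ψ (x (((s.take
              (((Finset.Icc 1 s.length).filter (fun t => φ t < ψ)).card)).map swapPerm).prod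
              u))).1 <
          (rotPt ψ (x (((s.take
              (((Finset.Icc 1 s.length).filter (fun t => φ t < ψ)).card)).map swapPerm).prod
              v))).1

/- ### Auxiliary lemmas -/

lemma zlem_aux (A B z : ℝ) (hA : A < 0) (hz0 : 0 < z) (hzπ : z < Real.pi)
    (hkey : A * Real.cos z = B * Real.sin z) :
    ∀ w, 0 < w → w < Real.pi →
      ((w < z → A * Real.cos w - B * Real.sin w < 0) ∧
       (z < w → 0 < A * Real.cos w - B * Real.sin w) ∧
       (w = z → A * Real.cos w - B * Real.sin w = 0)) := by
  have hszpos : 0 < Real.sin z := Real.sin_pos_of_pos_of_lt_pi hz0 hzπ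
  have hid : ∀ w : ℝ, A * Real.cos w - B * Real.sin w = (A / Real.sin z) * Real.sin (z - w) := by
    intro w
    have h3 : (A * Real.cos w - B * Real.sin w) * Real.sin z = A * Real.sin (z - w) := by
      rw [Real.sin_sub]; linear_combination Real.sin w * hkey
    rw [div_mul_eq_mul_div, eq_div_iff hszpos.ne']
    exact h3
  intro w hw0 hwπ
  have h2 : A / Real.sin z < 0 := div_neg_of_neg_of_pos hA hszpos
  refine ⟨?_, ?_, ?_⟩
  · intro hwz
    rw [hid w]
    have h1 : 0 < Real.sin (z - w) := Real.sin_pos_of_pos_of_lt_pi (by linarith) (by linarith)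
    exact mul_neg_of_neg_of_pos h2 h1
  · intro hzw
    rw [hid w]
    have h0 : 0 < Real.sin (w - z) := Real.sin_pos_of_pos_of_lt_pi (by linarith) (by linarith)
    have h1 : Real.sin (z - w) < 0 := by
      rw [show z - w = -(w - z) by ring, Real.sin_neg]; linarith
    exact mul_pos_of_neg_of_neg h2 h1
  · intro hwz
    rw [hid w, hwz, sub_self, Real.sin_zero, mul_zero]

lemma zlem (A B : ℝ) (hA : A < 0) :
    ∃ z, 0 < z ∧ z < Real.pi ∧ ∀ w, 0 < w → w < Real.pi →
      ((w < z → A * Real.cos w - B * Real.sin w < 0) ∧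
       (z < w → 0 < A * Real.cos w - B * Real.sin w) ∧
       (w = z → A * Real.cos w - B * Real.sin w = 0)) := by
  have hθ1 : -(Real.pi/2) < Real.arctan (B / A) := Real.neg_pi_div_two_lt_arctan _
  have hθ2 : Real.arctan (B / A) < Real.pi/2 := Real.arctan_lt_pi_div_two _
  have hz0 : (0:ℝ) < Real.pi/2 - Real.arctan (B / A) := by linarith
  have hzπ : Real.pi/2 - Real.arctan (B / A) < Real.pi := by linarith [Real.pi_pos]
  have hcθ : 0 < Real.cos (Real.arctan (B / A)) := Real.cos_arctan_pos _
  have hkey : A * Real.cos (Real.pi/2 - Real.arctan (B / A))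
      = B * Real.sin (Real.pi/2 - Real.arctan (B / A)) := by
    rw [Real.cos_pi_div_two_sub, Real.sin_pi_div_two_sub]
    have ht : Real.tan (Real.arctan (B / A)) = B / A := Real.tan_arctan _
    rw [Real.tan_eq_sin_div_cos] at ht
    rw [div_eq_div_iff hcθ.ne' hA.ne] at ht
    linarith [ht]
  exact ⟨_, hz0, hzπ, zlem_aux A B _ hA hz0 hzπ hkey⟩

lemma rot_sub (w : ℝ) (p q : ℝ × ℝ) :
    (rotPt w p).1 - (rotPt w q).1
      = (p.1 - q.1) * Real.cos w - (p.2 - q.2) * Real.sin w := by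
  simp only [rotPt]; ring

lemma swapPerm_fix (g v : ℕ) (h1 : v ≠ g) (h2 : v ≠ g + 1) : swapPerm g v = v :=
  Equiv.swap_apply_of_ne_of_ne h1 h2

lemma swapPerm_add (d g v : ℕ) : swapPerm (g + d) (v + d) = swapPerm g v + d := by
  unfold swapPerm
  rcases eq_or_ne v g with rfl | hvg
  · simp [Equiv.swap_apply_left]; omega
  rcases eq_or_ne v (g + 1) with rfl | hvg1
  · rw [show g + 1 + d = (g + d) + 1 by ring, Equiv.swap_apply_right,
      Equiv.swap_apply_right]
  · rw [Equiv.swap_apply_of_ne_of_ne hvg hvg1,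
      Equiv.swap_apply_of_ne_of_ne (by omega) (by omega)]

lemma prod_block (a b : ℕ) (L : List ℕ) (hL : ∀ g ∈ L, a ≤ g ∧ g ≤ b) :
    ∀ u, a ≤ u → u ≤ b + 1 →
      a ≤ ((L.map swapPerm).prod) u ∧ ((L.map swapPerm).prod) u ≤ b + 1 := by
  induction L with
  | nil => intro u h1 h2; simpa using ⟨h1, h2⟩
  | cons g L ih =>
    intro u h1 h2
    have hg := hL g (by simp)
    have hrest := ih (fun g' hg' => hL g' (by simp [hg'])) u h1 h2
    simp only [List.map_cons, List.prod_cons]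
    have hmul : (swapPerm g * ((L.map swapPerm).prod)) u
        = swapPerm g (((L.map swapPerm).prod) u) := rfl
    rw [hmul]
    set v := ((L.map swapPerm).prod) u
    rcases eq_or_ne v g with rfl | hvg
    · rw [show swapPerm v v = v + 1 from Equiv.swap_apply_left v (v+1)]; omega
    rcases eq_or_ne v (g + 1) with hv1 | hvg1
    · rw [hv1, show swapPerm g (g+1) = g from Equiv.swap_apply_right g (g+1)]; omega
    · rw [swapPerm_fix g v hvg hvg1]; exact hrest

lemma prod_shift (d : ℕ) (L : List ℕ) :
    ∀ u, ((L.map (fun g => g + d)).map swapPerm).prod (u + d)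
      = (((L.map swapPerm).prod) u) + d := by
  induction L with
  | nil => intro u; simp
  | cons g L ih =>
    intro u
    simp only [List.map_cons, List.prod_cons]
    have h1 : ∀ (σ τ : Equiv.Perm ℕ) (w : ℕ), (σ * τ) w = σ (τ w) := fun _ _ _ => rfl
    rw [h1, h1, ih, swapPerm_add]

lemma take_concat' (l : List ℕ) (n : ℕ) (h : n < l.length) :
    l.take (n+1) = l.take n ++ [l.getD n 0] := by
  rw [List.take_succ, List.getElem?_eq_getElem h, List.getD_eq_getElem l 0 h]; rfl

lemma filter_take_prefix (ω γms : List ℕ) (p : ℕ → Bool) (t : ℕ)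
    (hfil : (ω.take t).filter p = γms) (K : ℕ) (hK : K ≤ t) :
    (ω.take K).filter p = γms.take (((ω.take K).filter p).length) := by
  have h1 : ω.take K = (ω.take t).take K := by
    rw [List.take_take]; congr 1; omega
  have h2 : (ω.take K).filter p <+: γms := by
    rw [h1, ← hfil]; exact (List.take_prefix K (ω.take t)).filter p
  exact List.prefix_iff_eq_take.mp h2

def cfun (ω : List ℕ) (a b : ℕ) (K : ℕ) : ℕ :=
  ((ω.take K).filter (fun x => decide (a ≤ x ∧ x ≤ b))).length

def Qfun (γ : List ℕ) (r : ℕ) : Equiv.Perm ℕ := ((γ.take r).map swapPerm).prod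

def kfun (ω : List ℕ) (a b : ℕ) (r : ℕ) : ℕ := sInf {K | r ≤ cfun ω a b K}

lemma cfun_zero (ω : List ℕ) (a b : ℕ) : cfun ω a b 0 = 0 := by simp [cfun]

lemma cfun_mono (ω : List ℕ) (a b : ℕ) {K K' : ℕ} (h : K ≤ K') :
    cfun ω a b K ≤ cfun ω a b K' := by
  unfold cfun
  have h1 : ω.take K = (ω.take K').take K := by rw [List.take_take]; congr 1; omega
  rw [h1]
  exact (((List.take_prefix K (ω.take K')).filter _).sublist).length_le

lemma cfun_step (ω : List ℕ) (a b : ℕ) {K : ℕ} (h : K < ω.length) :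
    cfun ω a b (K+1) ≤ cfun ω a b K + 1 := by
  unfold cfun
  rw [take_concat' ω K h, List.filter_append, List.length_append]
  have := List.length_filter_le (fun x => decide (a ≤ x ∧ x ≤ b)) [ω.getD K 0]
  simp only [List.length_cons, List.length_nil] at this
  omega

lemma core_lemma (ω γms : List ℕ) (t a b : ℕ)
    (hfil : (ω.take t).filter (fun x => decide (a ≤ x ∧ x ≤ b)) = γms)
    (hbd : ∀ x ∈ ω.take t, x ≠ a - 1 ∧ x ≠ b + 1)
    (hpos : ∀ x ∈ ω, 0 < x) (ht : t ≤ ω.length) :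
    ∀ K, K ≤ t → ∀ u, a ≤ u → u ≤ b + 1 →
      ((ω.take K).map swapPerm).prod u
        = ((γms.take (cfun ω a b K)).map swapPerm).prod u := by
  set p : ℕ → Bool := fun x => decide (a ≤ x ∧ x ≤ b) with hp
  intro K
  induction K with
  | zero => intro _ u _ _; simp [cfun]
  | succ K ih =>
    intro hK u hu1 hu2
    have hKt : K ≤ t := by omega
    have hKlen : K < ω.length := by omega
    set g := ω.getD K 0 with hg
    have htk : ω.take (K+1) = ω.take K ++ [g] := take_concat' ω K hKlen
    have hgmem : g ∈ ω.take t := by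
      have h1 : ω.take (K+1) = (ω.take t).take (K+1) := by
        rw [List.take_take]; congr 1; omega
      have h2 : g ∈ ω.take (K+1) := by rw [htk]; simp
      rw [h1] at h2
      exact (List.take_prefix (K+1) (ω.take t)).sublist.subset h2
    have hgpos : 0 < g := hpos g ((List.take_prefix t ω).sublist.subset hgmem)
    have hfilsucc : (ω.take (K+1)).filter p
        = (ω.take K).filter p ++ (if p g then [g] else []) := by
      rw [htk, List.filter_append]
      congr 1
      by_cases h : p g <;> simp [h]
    have hprodsucc : ((ω.take (K+1)).map swapPerm).prod
        = ((ω.take K).map swapPerm).prod * swapPerm g := by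
      rw [htk, List.map_append, List.prod_append]; simp
    have hcdef : ∀ J, cfun ω a b J = ((ω.take J).filter p).length := fun _ => rfl
    by_cases hpg : p g
    · have hgab : a ≤ g ∧ g ≤ b := by
        rw [hp] at hpg; simpa using hpg
      have hlen : ((ω.take (K+1)).filter p).length = ((ω.take K).filter p).length + 1 := by
        rw [hfilsucc, if_pos hpg]; simp
      have hpreK := filter_take_prefix ω γms p t hfil K hKt
      have hpreK1 := filter_take_prefix ω γms p t hfil (K+1) (by omega)
      have hγtake : γms.take (((ω.take K).filter p).length + 1)
          = γms.take (((ω.take K).filter p).length) ++ [g] := by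
        rw [← hlen, ← hpreK1, hfilsucc, if_pos hpg]
        congr 1
      have hswapu : a ≤ swapPerm g u ∧ swapPerm g u ≤ b + 1 := by
        unfold swapPerm
        rcases eq_or_ne u g with rfl | hug
        · rw [Equiv.swap_apply_left]; omega
        rcases eq_or_ne u (g+1) with rfl | hug1
        · rw [Equiv.swap_apply_right]; omega
        · rw [Equiv.swap_apply_of_ne_of_ne hug hug1]; omega
      have h5 : ((ω.take (K+1)).map swapPerm).prod u
          = ((ω.take K).map swapPerm).prod (swapPerm g u) := by
        rw [hprodsucc]; rfl
      rw [h5, ih hKt (swapPerm g u) hswapu.1 hswapu.2, hcdef K, hcdef (K+1), hlen, hγtake]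
      rw [List.map_append, List.prod_append]
      simp only [List.map_cons, List.map_nil, List.prod_cons, List.prod_nil, mul_one]
      rfl
    · have hgbd := hbd g hgmem
      have hgab : ¬ (a ≤ g ∧ g ≤ b) := by
        rw [hp] at hpg; simpa using hpg
      have hfix : swapPerm g u = u := by
        apply swapPerm_fix <;> omega
      have hlen : ((ω.take (K+1)).filter p).length = ((ω.take K).filter p).length := by
        rw [hfilsucc, if_neg hpg]; simp
      have h5 : ((ω.take (K+1)).map swapPerm).prod u
          = ((ω.take K).map swapPerm).prod (swapPerm g u) := by
        rw [hprodsucc]; rfl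
      rw [h5, hfix, ih hKt u hu1 hu2, hcdef K, hcdef (K+1), hlen]


set_option maxHeartbeats 2000000 in
/-- If `ω` is a geometrically realizable sorting network of size `n` and the sorting network
`γ` of size `m ≥ 2`, viewed as a pattern, occurs in `ω` at time interval `[1, t]` and at
position `[a, a + m - 2]`, then `γ` is geometrically realizable. -/
theorem pattern_of_realizable_is_realizable (n : ℕ) (ω : List ℕ)
    (hω : IsSortingNetwork n ω) (hreal : GeometricallyRealizable n ω)
    (m : ℕ) (hm : 2 ≤ m) (γ : List ℕ) (hγ : IsSortingNetwork m γ)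
    (t a : ℕ) (hocc : OccursAt γ n ω 1 t a (a + m - 2)) :
    GeometricallyRealizable m γ := by
  obtain ⟨hn2, hωlen, hωmem, hωrev⟩ := hω
  obtain ⟨x, hx1, hx2, hx3, φ, hφrange, hφmono, hφmain⟩ := hreal
  obtain ⟨hm2', hγlen, hγmem, hγrev⟩ := hγ
  obtain ⟨-, h1t, htN, ha1, hab, hbn, hfil0, hbd0⟩ := hocc
  set b := a + m - 2 with hbdef
  have hfil : (ω.take t).filter (fun x => decide (a ≤ x ∧ x ≤ b))
      = γ.map (fun u => u + a - 1) := by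
    simpa using hfil0
  have hbd : ∀ x ∈ ω.take t, x ≠ a - 1 ∧ x ≠ b + 1 := by
    intro y hy; exact hbd0 y (by simpa using hy)
  have hb1n : b + 1 ≤ n := by omega
  -- basic facts about c, k
  have hct : cfun ω a b t = γ.length := by
    unfold cfun; rw [hfil]; simp
  have hcore := core_lemma ω (γ.map (fun u => u + a - 1)) t a b hfil hbd
    (fun y hy => (hωmem y hy).1) htN
  -- shift lemma
  have hγmem' : ∀ g ∈ γ, 1 ≤ g ∧ g ≤ m - 1 := by
    intro g hg; have := hγmem g hg; omega
  have hshift : ∀ r u, 1 ≤ u →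
      (((γ.map (fun g => g + a - 1)).take r).map swapPerm).prod (u + a - 1)
        = Qfun γ r u + a - 1 := by
    intro r u hu
    have h1 : (γ.map (fun g => g + a - 1)).take r
        = (γ.take r).map (fun g => g + (a-1)) := by
      rw [← List.map_take]
      exact List.map_congr_left (fun g hg => by
        have := hγmem' g ((List.take_prefix r γ).sublist.subset hg); omega)
    have h2 : u + a - 1 = u + (a - 1) := by omega
    rw [h1, h2, prod_shift (a-1) (γ.take r) u]
    unfold Qfun
    omega
  have hQrange : ∀ r u, 1 ≤ u → u ≤ m → 1 ≤ Qfun γ r u ∧ Qfun γ r u ≤ m := by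
    intro r u h1 h2
    have h3 := prod_block 1 (m-1) (γ.take r)
      (fun g hg => hγmem' g ((List.take_prefix r γ).sublist.subset hg)) u h1 (by omega)
    unfold Qfun
    exact ⟨h3.1, by omega⟩
  have hQzero : ∀ u, Qfun γ 0 u = u := by intro u; simp [Qfun]
  have hQfull : ∀ u, 1 ≤ u → u ≤ m → Qfun γ γ.length u = m + 1 - u := by
    intro u h1 h2
    unfold Qfun; rw [List.take_length]
    exact hγrev u (by simp; omega)
  -- facts about kfun
  have hkfacts : ∀ r, 1 ≤ r → r ≤ γ.length →
      1 ≤ kfun ω a b r ∧ kfun ω a b r ≤ t ∧ cfun ω a b (kfun ω a b r) = r := by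
    intro r h1 h2
    have hne : t ∈ {K | r ≤ cfun ω a b K} := by
      simp only [Set.mem_setOf_eq, hct]; exact h2
    have hmem : r ≤ cfun ω a b (kfun ω a b r) := Nat.sInf_mem (⟨t, hne⟩ : Set.Nonempty _)
    have hle : kfun ω a b r ≤ t := Nat.sInf_le hne
    have hpos : 1 ≤ kfun ω a b r := by
      by_contra h; push_neg at h
      have hk0 : kfun ω a b r = 0 := by omega
      rw [hk0, cfun_zero] at hmem; omega
    have hlt : cfun ω a b (kfun ω a b r - 1) < r := by
      have h3 : kfun ω a b r - 1 ∉ {K | r ≤ cfun ω a b K} := by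
        apply Nat.notMem_of_lt_sInf
        show kfun ω a b r - 1 < kfun ω a b r
        omega
      simp only [Set.mem_setOf_eq, not_le] at h3; exact h3
    have hstep := cfun_step ω a b (K := kfun ω a b r - 1) (by omega)
    have heq : kfun ω a b r - 1 + 1 = kfun ω a b r := by omega
    rw [heq] at hstep
    exact ⟨hpos, hle, by omega⟩
  have hkmono : ∀ r r', 1 ≤ r → r' ≤ γ.length → r < r' → kfun ω a b r < kfun ω a b r' := by
    intro r r' h1 h2 h3
    by_contra h; push_neg at h
    have e1 := (hkfacts r h1 (by omega)).2.2
    have e2 := (hkfacts r' (by omega) h2).2.2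
    have := cfun_mono ω a b h
    omega
  -- the sample lemma
  have hsample : ∀ K, K ≤ t → ∀ w : ℝ, 0 < w → w < Real.pi →
      (1 ≤ K → φ K < w) → (K < ω.length → w < φ (K+1)) →
      ∀ u v : ℕ, 1 ≤ u → u ≤ m → 1 ≤ v → v ≤ m → u < v →
        (rotPt w (x (Qfun γ (cfun ω a b K) u + a - 1))).1
          < (rotPt w (x (Qfun γ (cfun ω a b K) v + a - 1))).1 := by
    intro K hKt w hw0 hwπ hlow hhigh u v hu1 hu2 hv1 hv2 huv
    have hKN : K ≤ ω.length := le_trans hKt htN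
    have hlt : ∀ l, 1 ≤ l → l ≤ K → φ l < w := by
      intro l h1 h2
      rcases eq_or_lt_of_le h2 with rfl | h
      · exact hlow h1
      · calc φ l < φ K := hφmono l (by simp; omega) K (by simp; omega) h
          _ < w := hlow (by omega)
    have hgt : ∀ l, K < l → l ≤ ω.length → w < φ l := by
      intro l h1 h2
      have hK1 : K < ω.length := by omega
      rcases eq_or_lt_of_le (show K + 1 ≤ l by omega) with heq | h
      · rw [← heq]; exact hhigh hK1
      · calc w < φ (K+1) := hhigh hK1
          _ < φ l := hφmono (K+1) (by simp; omega) l (by simp; omega) h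
    have hwne : ∀ l ∈ Finset.Icc 1 ω.length, w ≠ φ l := by
      intro l hl; simp only [Finset.mem_Icc] at hl
      rcases le_or_gt l K with h | h
      · exact (hlt l hl.1 h).ne'
      · exact (hgt l h hl.2).ne
    have hcard : ((Finset.Icc 1 ω.length).filter (fun t' => φ t' < w)).card = K := by
      have hset : (Finset.Icc 1 ω.length).filter (fun t' => φ t' < w) = Finset.Icc 1 K := by
        ext l
        simp only [Finset.mem_filter, Finset.mem_Icc]
        constructor
        · rintro ⟨⟨h1, h2⟩, h3⟩
          refine ⟨h1, ?_⟩
          by_contra h4; push_neg at h4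
          exact absurd h3 (not_lt.mpr (hgt l h4 h2).le)
        · rintro ⟨h1, h2⟩
          exact ⟨⟨h1, by omega⟩, hlt l h1 h2⟩
      rw [hset]; simp
    have hmem1 : u + a - 1 ∈ Finset.Icc 1 n := by simp; omega
    have hmem2 : v + a - 1 ∈ Finset.Icc 1 n := by simp; omega
    have hmain := hφmain w hw0 hwπ hwne (u + a - 1) hmem1 (v + a - 1) hmem2 (by omega)
    rw [hcard] at hmain
    rw [hcore K hKt (u+a-1) (by omega) (by omega),
      hcore K hKt (v+a-1) (by omega) (by omega)] at hmain
    rw [hshift (cfun ω a b K) u hu1, hshift (cfun ω a b K) v hv1] at hmain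
    exact hmain
  -- now build the realization of γ
  refine ⟨fun u => x (u + a - 1), ?_, ?_, ?_,
    fun r => φ (kfun ω a b r), ?_, ?_, ?_⟩
  · -- increasing first coordinates
    intro i hi j hj hij
    simp only [Finset.mem_Icc] at hi hj
    exact hx1 (i + a - 1) (by simp; omega) (j + a - 1) (by simp; omega) (by omega)
  · -- no three collinear
    intro i hi j hj k hk hij hik hjk
    simp only [Finset.mem_Icc] at hi hj hk
    exact hx2 (i + a - 1) (by simp; omega) (j + a - 1) (by simp; omega)
      (k + a - 1) (by simp; omega) (by omega) (by omega) (by omega)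
  · -- no two pairs parallel
    intro i hi j hj k hk l hl hij hkl hpair
    simp only [Finset.mem_Icc] at hi hj hk hl
    refine hx3 (i + a - 1) (by simp; omega) (j + a - 1) (by simp; omega)
      (k + a - 1) (by simp; omega) (l + a - 1) (by simp; omega) (by omega) (by omega) ?_
    intro hcon
    apply hpair
    have h1 : ∀ y ∈ ({i + a - 1, j + a - 1} : Finset ℕ), y ∈ ({k + a - 1, l + a - 1} : Finset ℕ) := by
      rw [hcon]; intro y hy; exact hy
    have h2 : i + a - 1 ∈ ({k + a - 1, l + a - 1} : Finset ℕ) := h1 _ (by simp)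
    have h3 : j + a - 1 ∈ ({k + a - 1, l + a - 1} : Finset ℕ) := h1 _ (by simp)
    simp only [Finset.mem_insert, Finset.mem_singleton] at h2 h3
    have h4 : (i = k ∨ i = l) ∧ (j = k ∨ j = l) := by omega
    have h5 : ({i, j} : Finset ℕ) = {k, l} := by
      rcases h4.1 with rfl | rfl <;> rcases h4.2 with rfl | rfl
      · omega
      · rfl
      · exact Finset.pair_comm i j
      · omega
    exact h5
  · -- range of φ'
    intro r hr
    simp only [Finset.mem_Icc] at hr
    obtain ⟨hk1, hk2, -⟩ := hkfacts r hr.1 hr.2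
    exact hφrange (kfun ω a b r) (by simp; omega)
  · -- monotone φ'
    intro r hr r' hr' hlt
    simp only [Finset.mem_Icc] at hr hr'
    obtain ⟨hk1, hk2, -⟩ := hkfacts r hr.1 hr.2
    obtain ⟨hk1', hk2', -⟩ := hkfacts r' hr'.1 hr'.2
    exact hφmono (kfun ω a b r) (by simp; omega) (kfun ω a b r') (by simp; omega)
      (hkmono r r' hr.1 hr'.2 hlt)
  · -- the main clause
    intro ψ hψ0 hψπ hψne u hu v hv huv
    simp only [Finset.mem_Icc] at hu hv
    dsimp only
    set r := ((Finset.Icc 1 γ.length).filter (fun t' => φ (kfun ω a b t') < ψ)).card with hrdef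
    clear_value r
    have hrle : r ≤ γ.length := by
      rw [hrdef]
      calc ((Finset.Icc 1 γ.length).filter (fun t' => φ (kfun ω a b t') < ψ)).card
          ≤ (Finset.Icc 1 γ.length).card := Finset.card_filter_le _ _
        _ = γ.length := by simp
    have hφ'mono : ∀ r1 r2, 1 ≤ r1 → r2 ≤ γ.length → r1 < r2 →
        φ (kfun ω a b r1) < φ (kfun ω a b r2) := by
      intro r1 r2 h1 h2 h3
      obtain ⟨e1, e2, -⟩ := hkfacts r1 h1 (by omega)
      obtain ⟨e1', e2', -⟩ := hkfacts r2 (by omega) h2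
      exact hφmono _ (by simp; omega) _ (by simp; omega) (hkmono r1 r2 h1 h2 h3)
    have hra : 1 ≤ r → φ (kfun ω a b r) < ψ := by
      intro h1
      by_contra hcon; push_neg at hcon
      have hne := hψne r (by simp; omega)
      have hlt' : ψ < φ (kfun ω a b r) := lt_of_le_of_ne hcon (by simpa using hne)
      have hsub : (Finset.Icc 1 γ.length).filter (fun t' => φ (kfun ω a b t') < ψ)
          ⊆ Finset.Icc 1 (r-1) := by
        intro s hs
        simp only [Finset.mem_filter, Finset.mem_Icc] at hs ⊢
        obtain ⟨⟨e1, e2⟩, e3⟩ := hs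
        refine ⟨e1, ?_⟩
        by_contra h4; push_neg at h4
        rcases eq_or_lt_of_le (show r ≤ s by omega) with rfl | h5
        · linarith
        · have := hφ'mono r s h1 e2 h5
          linarith
      have hcard := Finset.card_le_card hsub
      simp only [Nat.card_Icc] at hcard
      omega
    have hrb : r < γ.length → ψ < φ (kfun ω a b (r+1)) := by
      intro h1
      by_contra hcon; push_neg at hcon
      have hne := hψne (r+1) (by simp; omega)
      have hlt' : φ (kfun ω a b (r+1)) < ψ := lt_of_le_of_ne hcon (by
        intro h; exact (hψne (r+1) (by simp; omega)) h.symm)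
      have hsub : Finset.Icc 1 (r+1)
          ⊆ (Finset.Icc 1 γ.length).filter (fun t' => φ (kfun ω a b t') < ψ) := by
        intro s hs
        simp only [Finset.mem_filter, Finset.mem_Icc] at hs ⊢
        refine ⟨⟨hs.1, by omega⟩, ?_⟩
        rcases eq_or_lt_of_le hs.2 with rfl | h5
        · exact hlt'
        · calc φ (kfun ω a b s) < φ (kfun ω a b (r+1)) := hφ'mono s (r+1) hs.1 (by omega) h5
            _ < ψ := hlt'
      have hcard := Finset.card_le_card hsub
      simp only [Nat.card_Icc] at hcard
      omega
    -- identify goal with Qfun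
    have hQdef : ((γ.take r).map swapPerm).prod = Qfun γ r := rfl
    rw [hQdef]
    obtain ⟨hQU1, hQU2⟩ := hQrange r u hu.1 hu.2
    obtain ⟨hQV1, hQV2⟩ := hQrange r v hv.1 hv.2
    have hQne : Qfun γ r u ≠ Qfun γ r v := fun h => (by omega : u ≠ v) ((Qfun γ r).injective h)
    rcases lt_or_gt_of_ne hQne with hij | hij
    · -- Qfun r u < Qfun r v : pair in original order, need ψ < z
      have hrlt : r < γ.length := by
        rcases eq_or_lt_of_le hrle with heq | h
        · exfalso
          rw [heq] at hij
          rw [hQfull u hu.1 hu.2, hQfull v hv.1 hv.2] at hij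
          omega
        · exact h
      obtain ⟨hK1, hKt', hcK1⟩ := hkfacts (r+1) (by omega) (by omega)
      set K := kfun ω a b (r+1) - 1 with hKdef
      clear_value K
      have hKsucc : K + 1 = kfun ω a b (r+1) := by omega
      have hcK : cfun ω a b K = r := by
        have hnm : K ∉ {J | r + 1 ≤ cfun ω a b J} := by
          apply Nat.notMem_of_lt_sInf
          show K < kfun ω a b (r+1)
          omega
        simp only [Set.mem_setOf_eq, not_le] at hnm
        rcases Nat.eq_zero_or_pos r with hr0 | hr0
        · omega
        · obtain ⟨f1, f2, f3⟩ := hkfacts r hr0 (by omega)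
          have f4 := hkmono r (r+1) hr0 (by omega) (by omega)
          have f5 := cfun_mono ω a b (show kfun ω a b r ≤ K by omega)
          omega
      have hψlt : ψ < φ (K + 1) := by rw [hKsucc]; exact hrb hrlt
      have hφK1π : φ (K+1) < Real.pi := (hφrange (K+1) (by simp; omega)).2
      set lb : ℝ := if K = 0 then ψ else max ψ (φ K) with hlbdef
      clear_value lb
      have hlb1 : ψ ≤ lb := by
        rw [hlbdef]; split
        · exact le_refl ψ
        · exact le_max_left _ _
      have hlb2 : lb < φ (K+1) := by
        rw [hlbdef]; split
        · exact hψlt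
        · rename_i hKne
          refine max_lt hψlt ?_
          exact hφmono K (by simp; omega) (K+1) (by simp; omega) (by omega)
      set w := (lb + φ (K+1))/2 with hwdef
      clear_value w
      have hw1 : lb < w := by rw [hwdef]; linarith
      have hw2 : w < φ (K+1) := by rw [hwdef]; linarith
      have hw0 : 0 < w := lt_of_lt_of_le hψ0 (le_trans hlb1 hw1.le)
      have hwπ : w < Real.pi := hw2.trans hφK1π
      have hlowK : 1 ≤ K → φ K < w := by
        intro hK1'
        have : φ K ≤ lb := by
          rw [hlbdef]; rw [if_neg (by omega)]; exact le_max_right _ _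
        linarith
      have hsamp := hsample K (by omega) w hw0 hwπ hlowK (fun _ => hw2)
        u v hu.1 hu.2 hv.1 hv.2 huv
      rw [hcK] at hsamp
      -- set up the pair
      have hA : (x (Qfun γ r u + a - 1)).1 - (x (Qfun γ r v + a - 1)).1 < 0 := by
        have := hx1 (Qfun γ r u + a - 1) (by simp; omega) (Qfun γ r v + a - 1)
          (by simp; omega) (by omega)
        linarith
      obtain ⟨z, hz0, hzπ, hzprop⟩ := zlem _
        ((x (Qfun γ r u + a - 1)).2 - (x (Qfun γ r v + a - 1)).2) hA
      have hfw : ((x (Qfun γ r u + a - 1)).1 - (x (Qfun γ r v + a - 1)).1) * Real.cos w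
          - ((x (Qfun γ r u + a - 1)).2 - (x (Qfun γ r v + a - 1)).2) * Real.sin w < 0 := by
        have := rot_sub w (x (Qfun γ r u + a - 1)) (x (Qfun γ r v + a - 1))
        linarith
      have hwz : w < z := by
        rcases lt_trichotomy w z with h | h | h
        · exact h
        · exfalso; have := (hzprop w hw0 hwπ).2.2 h; linarith
        · exfalso; have := (hzprop w hw0 hwπ).2.1 h; linarith
      have hψz : ψ < z := by
        have : ψ < w := lt_of_le_of_lt hlb1 hw1
        linarith
      have hfψ := (hzprop ψ hψ0 hψπ).1 hψz
      have := rot_sub ψ (x (Qfun γ r u + a - 1)) (x (Qfun γ r v + a - 1))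
      linarith
    · -- Qfun r v < Qfun r u : pair already crossed, need z < ψ
      have hr1 : 1 ≤ r := by
        by_contra h; push_neg at h
        have hr0 : r = 0 := by omega
        rw [hr0, hQzero, hQzero] at hij
        omega
      obtain ⟨hK1, hKt', hcK⟩ := hkfacts r hr1 hrle
      set K := kfun ω a b r with hKdef
      clear_value K
      have hψgt : φ K < ψ := hra hr1
      have hφKπ : φ K < Real.pi := (hφrange K (by simp; omega)).2
      have hφK0 : 0 < φ K := (hφrange K (by simp; omega)).1
      set ub : ℝ := min ψ (if K < ω.length then φ (K+1) else Real.pi) with hubdef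
      clear_value ub
      have hub1 : ub ≤ ψ := by rw [hubdef]; exact min_le_left _ _
      have hub2 : φ K < ub := by
        rw [hubdef]
        refine lt_min hψgt ?_
        split
        · rename_i hKlen
          exact hφmono K (by simp; omega) (K+1) (by simp; omega) (by omega)
        · exact hφKπ
      set w := (φ K + ub)/2 with hwdef
      clear_value w
      have hw1 : φ K < w := by rw [hwdef]; linarith
      have hw2 : w < ub := by rw [hwdef]; linarith
      have hw0 : 0 < w := hφK0.trans hw1
      have hwψ : w < ψ := lt_of_lt_of_le hw2 hub1
      have hwπ : w < Real.pi := hwψ.trans hψπ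
      have hhighK : K < ω.length → w < φ (K+1) := by
        intro hKlen
        have : ub ≤ φ (K+1) := by
          rw [hubdef, if_pos hKlen]; exact min_le_right _ _
        linarith
      have hsamp := hsample K hKt' w hw0 hwπ (fun _ => hw1) hhighK
        u v hu.1 hu.2 hv.1 hv.2 huv
      rw [hcK] at hsamp
      -- pair ordered: (Qfun r v, Qfun r u) with Qfun r v < Qfun r u
      have hA : (x (Qfun γ r v + a - 1)).1 - (x (Qfun γ r u + a - 1)).1 < 0 := by
        have := hx1 (Qfun γ r v + a - 1) (by simp; omega) (Qfun γ r u + a - 1)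
          (by simp; omega) (by omega)
        linarith
      obtain ⟨z, hz0, hzπ, hzprop⟩ := zlem _
        ((x (Qfun γ r v + a - 1)).2 - (x (Qfun γ r u + a - 1)).2) hA
      have hfw : 0 < ((x (Qfun γ r v + a - 1)).1 - (x (Qfun γ r u + a - 1)).1) * Real.cos w
          - ((x (Qfun γ r v + a - 1)).2 - (x (Qfun γ r u + a - 1)).2) * Real.sin w := by
        have := rot_sub w (x (Qfun γ r v + a - 1)) (x (Qfun γ r u + a - 1))
        linarith
      have hzw : z < w := by
        rcases lt_trichotomy w z with h | h | h
        · exfalso; have := (hzprop w hw0 hwπ).1 h; linarith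
        · exfalso; have := (hzprop w hw0 hwπ).2.2 h; linarith
        · exact h
      have hzψ : z < ψ := hzw.trans hwψ
      have hfψ := (hzprop ψ hψ0 hψπ).2.1 hzψ
      have := rot_sub ψ (x (Qfun γ r v + a - 1)) (x (Qfun γ r u + a - 1))
      linarith
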